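/- Let G be a finite DAG and G' the result of functionally eliminating a vertex T from G (add edges from each parent of T to each child of T, remove T). Then for any disjoint sets of vertices X, Y, Z of G not containing T: if X and Y are d-separated by Z in G, then X and Y are d-separated by Z in G'. -/
import Mathlib


/-- `Act E Z a d b`: there is a `Z`-active (undirected) walk from `a` to `b` in the
digraph `E`, where `d` records whether the last edge points into `b`. A non-collider
on the walk must be outside `Z`; a collider must have a descendant (possibly itself)
in `Z`. -/
inductive Act {V : Type*} (E : V → V → Prop) (Z : Set V) : V → Bool → V → Prop where
  | into {a b : V} : E a b → Act E Z a true b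
  | outof {a b : V} : E b a → Act E Z a false b
  | step_out {a m c : V} {d : Bool} :
      Act E Z a d m → E m c → m ∉ Z → Act E Z a true c
  | step_in {a m c : V} {d : Bool} :
      Act E Z a d m → E c m →
      (d = true → ∃ w, Relation.ReflTransGen E m w ∧ w ∈ Z) →
      (d = false → m ∉ Z) → Act E Z a false c

/-- `X` and `Y` are d-separated by `Z`: no active walk connects a vertex of `X` to a
vertex of `Y`. -/
def DSep {V : Type*} (E : V → V → Prop) (Z : Set V) (X Y : Set V) : Prop :=
  ∀ x ∈ X, ∀ y ∈ Y, ¬ ∃ d, Act E Z x d y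

/-- Functional elimination of a vertex `T` from a digraph. -/
def elimVertex {V : Type*} (E : V → V → Prop) (T : V) : V → V → Prop :=
  fun a b => a ≠ T ∧ b ≠ T ∧ (E a b ∨ (E a T ∧ E T b))

/-- Functional elimination of a vertex `T` preserves d-separation of
disjoint sets `X`, `Y`, `Z` not containing `T`. -/
theorem dsep_preserved_by_elimVertex {V : Type*} [Fintype V]
    (E : V → V → Prop) (hacyc : ∀ v, ¬ Relation.TransGen E v v)
    (T : V) (X Y Z : Set V)
    (hXY : Disjoint X Y) (hXZ : Disjoint X Z) (hYZ : Disjoint Y Z)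
    (hT : T ∉ X ∪ Y ∪ Z) :
    DSep E Z X Y → DSep (elimVertex E T) Z X Y := by
  have hTZ : T ∉ Z := fun h => hT (Or.inr h)
  have hrt : ∀ {m w : V}, Relation.ReflTransGen (elimVertex E T) m w →
      Relation.ReflTransGen E m w := by
    intro m w h
    induction h with
    | refl => exact Relation.ReflTransGen.refl
    | tail _ hbc ih =>
        rcases hbc with ⟨_, _, hE | ⟨h1, h2⟩⟩
        · exact ih.tail hE
        · exact (ih.tail h1).tail h2
  have key : ∀ {a : V} {d : Bool} {b : V}, Act (elimVertex E T) Z a d b →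
      Act E Z a d b := by
    intro a d b h
    induction h with
    | into hE =>
        rcases hE with ⟨_, _, hE | ⟨h1, h2⟩⟩
        · exact Act.into hE
        · exact Act.step_out (Act.into h1) h2 hTZ
    | outof hE =>
        rcases hE with ⟨_, _, hE | ⟨h1, h2⟩⟩
        · exact Act.outof hE
        · exact Act.step_in (Act.outof h2) h1 (by simp) (fun _ => hTZ)
    | step_out _ hE hm ih =>
        rcases hE with ⟨_, _, hE | ⟨h1, h2⟩⟩
        · exact Act.step_out ih hE hm
        · exact Act.step_out (Act.step_out ih h1 hm) h2 hTZ
    | step_in _ hE hdt hdf ih =>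
        have hdt' : _ = true → ∃ w, Relation.ReflTransGen E _ w ∧ w ∈ Z :=
          fun hd => (hdt hd).imp (fun w ⟨h1, h2⟩ => ⟨hrt h1, h2⟩)
        rcases hE with ⟨_, _, hE | ⟨h1, h2⟩⟩
        · exact Act.step_in ih hE hdt' hdf
        · exact Act.step_in (Act.step_in ih h2 hdt' hdf) h1 (by simp) (fun _ => hTZ)
  intro hsep x hx y hy ⟨d, hact⟩
  exact hsep x hx y hy ⟨d, key hact⟩
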